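/- The Bounded Quantification Lemma: for every natural number n, Robinson Arithmetic proves that for all x with x < S n̄, we have x = 0̄ ∨ x = 1̄ ∨ … ∨ x = n̄ (a finite disjunction over all numerals up to n). -/
import Mathlib


open FirstOrder FirstOrder.Language

/-- Function symbols of the language of arithmetic `{0, S, +, ×}`. -/
inductive ArithFunc : ℕ → Type
  | zero : ArithFunc 0
  | succ : ArithFunc 1
  | add : ArithFunc 2
  | mul : ArithFunc 2

/-- The first-order language of arithmetic. -/
def L : Language := ⟨ArithFunc, fun _ => Empty⟩

/-- The term `0`. -/
def zeroT {α : Type} : L.Term α := Constants.term ArithFunc.zero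

/-- The term `S t`. -/
def succT {α : Type} (t : L.Term α) : L.Term α := Functions.apply₁ ArithFunc.succ t

/-- The term `s + t`. -/
def addT {α : Type} (s t : L.Term α) : L.Term α := Functions.apply₂ ArithFunc.add s t

/-- The term `s × t`. -/
def mulT {α : Type} (s t : L.Term α) : L.Term α := Functions.apply₂ ArithFunc.mul s t

/-- The numeral `n̄ = S … S 0`. -/
def num {α : Type} : ℕ → L.Term α
  | 0 => zeroT
  | n + 1 => succT (num n)

/-- The `i`-th bounded variable as a term. -/
def v {α : Type} {n : ℕ} (i : Fin n) : L.Term (α ⊕ Fin n) := Term.var (Sum.inr i)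

/-- The ordering `s < t := ∃ z, S z + s = t`. -/
def ltF {α : Type} {n : ℕ} (s t : L.Term (α ⊕ Fin n)) : L.BoundedFormula α n :=
  BoundedFormula.ex
    (Term.bdEqual
      (addT (succT (Term.var (Sum.inr (Fin.last n)))) (s.relabel (Sum.map id Fin.castSucc)))
      (t.relabel (Sum.map id Fin.castSucc)))

/-- Axiom S0 : `∀ x, ¬ S x = 0`. -/
def axS0 : L.Sentence := ∀' ∼(Term.bdEqual (succT (v 0)) zeroT)

/-- Axiom S1 : `∀ x y, S x = S y → x = y`. -/
def axS1 : L.Sentence := ∀' ∀' (Term.bdEqual (succT (v 0)) (succT (v 1)) ⟹ Term.bdEqual (v 0) (v 1))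

/-- Axiom S2 : `∀ x, x = 0 ∨ ∃ y, S y = x`. -/
def axS2 : L.Sentence := ∀' (Term.bdEqual (v 0) zeroT ⊔ ∃' (Term.bdEqual (succT (v 1)) (v 0)))

/-- Axiom A0 : `∀ x, x + 0 = x`. -/
def axA0 : L.Sentence := ∀' (Term.bdEqual (addT (v 0) zeroT) (v 0))

/-- Axiom A1 : `∀ x y, x + S y = S (x + y)`. -/
def axA1 : L.Sentence := ∀' ∀' (Term.bdEqual (addT (v 0) (succT (v 1))) (succT (addT (v 0) (v 1))))

/-- Axiom M0 : `∀ x, x × 0 = 0`. -/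
def axM0 : L.Sentence := ∀' (Term.bdEqual (mulT (v 0) zeroT) zeroT)

/-- Axiom M1 : `∀ x y, x × S y = x + (x × y)`. -/
def axM1 : L.Sentence := ∀' ∀' (Term.bdEqual (mulT (v 0) (succT (v 1))) (addT (v 0) (mulT (v 0) (v 1))))

/-- Robinson Arithmetic. -/
def Q : L.Theory := {axS0, axS1, axS2, axA0, axA1, axM0, axM1}

/-- The disjunction `x = 0̄ ∨ x = 1̄ ∨ … ∨ x = n̄`. -/
def eqDisj : ℕ → L.BoundedFormula Empty 1
  | 0 => Term.bdEqual (v 0) (num 0)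
  | n + 1 => eqDisj n ⊔ Term.bdEqual (v 0) (num (n + 1))

section
variable {M : Type} (z : M) (s : M → M) (a : M → M → M)

lemma Qnonzero (h0 : ∀ x : M, s x ≠ z) (h2 : ∀ x : M, x = z ∨ ∃ y, s y = x)
    (h3 : ∀ x, a x z = x) (h4 : ∀ x y, a x (s y) = s (a x y)) :
    ∀ c x, a (s c) x ≠ z := by
  intro c x
  rcases h2 x with rfl | ⟨y, rfl⟩
  · rw [h3]; exact h0 c
  · rw [h4]; exact h0 _

lemma Qkey (h0 : ∀ x : M, s x ≠ z) (h1 : ∀ x y : M, s x = s y → x = y)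
    (h2 : ∀ x : M, x = z ∨ ∃ y, s y = x)
    (h3 : ∀ x, a x z = x) (h4 : ∀ x y, a x (s y) = s (a x y)) :
    ∀ n (x c : M), a (s c) x = s (s^[n] z) → ∃ k ≤ n, x = s^[k] z := by
  intro n
  induction n with
  | zero =>
    intro x c h
    rcases h2 x with rfl | ⟨y, rfl⟩
    · exact ⟨0, le_refl _, rfl⟩
    · rw [h4] at h
      exact absurd (h1 _ _ h) (Qnonzero z s a h0 h2 h3 h4 c y)
  | succ n ih =>
    intro x c h
    rcases h2 x with rfl | ⟨y, rfl⟩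
    · exact ⟨0, Nat.zero_le _, rfl⟩
    · rw [h4, Function.iterate_succ_apply'] at h
      obtain ⟨k, hk, rfl⟩ := ih y c (h1 _ _ h)
      exact ⟨k + 1, Nat.succ_le_succ hk, by rw [Function.iterate_succ_apply']⟩
end

variable {M : Type} [L.Structure M]
def zM : M := Structure.funMap (L := L) ArithFunc.zero ![]
def sM (x : M) : M := Structure.funMap (L := L) ArithFunc.succ ![x]
def aM (x y : M) : M := Structure.funMap (L := L) ArithFunc.add ![x, y]

@[simp] lemma realize_zeroT {α : Type} (env : α → M) : Term.realize env (zeroT) = zM := by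
  simp only [zeroT, zM, Term.realize, Constants.term]
  congr 1; ext i; exact i.elim0

@[simp] lemma realize_succT {α : Type} (env : α → M) (t : L.Term α) :
    Term.realize env (succT t) = sM (Term.realize env t) := by
  simp only [succT, sM, Term.realize, Functions.apply₁]
  congr 1; ext i; fin_cases i; simp

@[simp] lemma realize_addT {α : Type} (env : α → M) (t u : L.Term α) :
    Term.realize env (addT t u) = aM (Term.realize env t) (Term.realize env u) := by
  simp only [addT, aM, Term.realize, Functions.apply₂]
  congr 1; ext i; fin_cases i <;> simp

@[simp] lemma realize_num {α : Type} (env : α → M) (k : ℕ) :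
    Term.realize env (num k) = sM^[k] (zM : M) := by
  induction k with
  | zero => simp [num]
  | succ k ih => simp [num, ih, Function.iterate_succ_apply']


@[simp] lemma snoc_one_zero {M : Type} (f : Fin 0 → M) (a : M) :
    (Fin.snoc f a : Fin 1 → M) 0 = a := rfl
@[simp] lemma snoc_two_zero {M : Type} (f : Fin 1 → M) (b : M) :
    (Fin.snoc f b : Fin 2 → M) 0 = f 0 := rfl
@[simp] lemma snoc_two_one {M : Type} (f : Fin 1 → M) (b : M) :
    (Fin.snoc f b : Fin 2 → M) 1 = b := rfl

@[simp] lemma realize_eqDisj {M : Type} [L.Structure M] (env : Empty → M) (xs : Fin 1 → M)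
    (n : ℕ) : (eqDisj n).Realize env xs ↔ ∃ k ≤ n, xs 0 = sM^[k] (zM : M) := by
  induction n with
  | zero =>
    simp [eqDisj, BoundedFormula.realize_bdEqual, v, Nat.le_zero]
  | succ n ih =>
    simp only [eqDisj, BoundedFormula.realize_sup, ih, BoundedFormula.realize_bdEqual,
      Term.realize_var, realize_num, v, Sum.elim_inr]
    constructor
    · rintro (⟨k, hk, h⟩ | h)
      · exact ⟨k, hk.trans (Nat.le_succ n), h⟩
      · exact ⟨n + 1, le_refl _, h⟩
    · rintro ⟨k, hk, h⟩
      rcases Nat.lt_or_ge k (n + 1) with h' | h'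
      · exact Or.inl ⟨k, Nat.lt_succ_iff.mp h', h⟩
      · exact Or.inr (by rw [h, Nat.le_antisymm hk h'])

/-- The Bounded Quantification Lemma: for every `n`, Robinson Arithmetic proves
`∀ x, x < S n̄ → (x = 0̄ ∨ … ∨ x = n̄)`. -/
theorem bounded_quantification (n : ℕ) :
    Q ⊨ᵇ (∀' (ltF (α := Empty) (v 0) (succT (num n)) ⟹ eqDisj n) : L.Sentence) := by
  intro M env xs
  have hS0 := M.is_model.realize_of_mem axS0 (by simp [Q])
  have hS1 := M.is_model.realize_of_mem axS1 (by simp [Q])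
  have hS2 := M.is_model.realize_of_mem axS2 (by simp [Q])
  have hA0 := M.is_model.realize_of_mem axA0 (by simp [Q])
  have hA1 := M.is_model.realize_of_mem axA1 (by simp [Q])
  simp only [axS0, axS1, axS2, axA0, axA1, Sentence.Realize, Formula.Realize,
    BoundedFormula.realize_all, BoundedFormula.realize_imp, BoundedFormula.realize_not,
    BoundedFormula.realize_ex, BoundedFormula.realize_sup, BoundedFormula.realize_bdEqual,
    Term.realize_var, realize_zeroT, realize_succT, realize_addT, realize_num, v, Sum.elim_inr,
    Term.realize_relabel] at hS0 hS1 hS2 hA0 hA1 ⊢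
  simp only [snoc_one_zero, snoc_two_zero, snoc_two_one] at hS0 hS1 hS2 hA0 hA1
  intro x hx
  simp only [ltF, BoundedFormula.realize_ex, BoundedFormula.realize_bdEqual, Term.realize_relabel,
    realize_addT, realize_succT, realize_num, Term.realize_var, Sum.elim_inr, Sum.map_inr,
    Function.comp_apply, Fin.snoc_last, Fin.snoc_castSucc,
    snoc_one_zero, snoc_two_zero, snoc_two_one] at hx
  obtain ⟨c, hc⟩ := hx
  rw [realize_eqDisj]
  simp only [snoc_one_zero]
  exact Qkey zM sM aM hS0 hS1 hS2 hA0 hA1 n x c hc
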